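/- Let R be a commutative unital ring and a ∈ R with a^{2|n-m|+1} ∉ R·a^{2|n-m|+2}, where m, n, j, k, l ≥ 0 are integers. If the diagonal matrix with m entries 1, k entries a, and j entries a² is Malcolmson subequivalent to the diagonal matrix with n entries 1 and l entries a², then k ≤ 2(n - m). -/

import Mathlib

open Matrix in
/-- The type of all rectangular matrices over `R`. -/
abbrev MatSig (R : Type) [Ring R] := Σ (n m : ℕ), Matrix (Fin n) (Fin m) R

open Matrix in
/-- The block diagonal-with-corner matrix `[[C, E], [0, D]]`, as an element of `MatSig R`. -/
def blockSig {R : Type} [Ring R] {p q r s : ℕ} (C : Matrix (Fin p) (Fin r) R)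
    (E : Matrix (Fin p) (Fin s) R) (D : Matrix (Fin q) (Fin s) R) : MatSig R :=
  ⟨p + q, r + s, Matrix.reindex finSumFinEquiv finSumFinEquiv (Matrix.fromBlocks C E 0 D)⟩

/-- One step of the Malcolmson relation: `A ≲ B` iff `A = C * B * D` for some `C, D`, or
`B = [[C, E], [0, D]]` and `A = [[C, 0], [0, D]]` for some `C, D, E`. -/
def MStep {R : Type} [Ring R] (A B : MatSig R) : Prop :=
  (∃ (C : Matrix (Fin A.1) (Fin B.1) R) (D : Matrix (Fin B.2.1) (Fin A.2.1) R),
      A.2.2 = C * B.2.2 * D) ∨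
  (∃ (p q r s : ℕ) (C : Matrix (Fin p) (Fin r) R) (E : Matrix (Fin p) (Fin s) R)
      (D : Matrix (Fin q) (Fin s) R), A = blockSig C 0 D ∧ B = blockSig C E D)

/-- Malcolmson subequivalence `A ≼_M B`: a finite chain of `MStep`s from `A` to `B`. -/
def Msub {R : Type} [Ring R] (A B : MatSig R) : Prop :=
  Relation.ReflTransGen (MStep (R := R)) A B

/-- A Sylvester matrix rank function for a unital ring `R`. -/
structure SylvesterRank (R : Type) [Ring R] where
  rk : MatSig R → ℝ
  rk_nonneg : ∀ A, 0 ≤ rk A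
  rk_zero : rk ⟨1, 1, 0⟩ = 0
  rk_one : rk ⟨1, 1, 1⟩ = 1
  rk_mul_le_left : ∀ {n m k : ℕ} (A : Matrix (Fin n) (Fin m) R) (B : Matrix (Fin m) (Fin k) R),
      rk ⟨n, k, A * B⟩ ≤ rk ⟨n, m, A⟩
  rk_mul_le_right : ∀ {n m k : ℕ} (A : Matrix (Fin n) (Fin m) R) (B : Matrix (Fin m) (Fin k) R),
      rk ⟨n, k, A * B⟩ ≤ rk ⟨m, k, B⟩
  rk_diag : ∀ {p q r s : ℕ} (A : Matrix (Fin p) (Fin r) R) (B : Matrix (Fin q) (Fin s) R),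
      rk (blockSig A 0 B) = rk ⟨p, r, A⟩ + rk ⟨q, s, B⟩
  rk_block_ge : ∀ {p q r s : ℕ} (A : Matrix (Fin p) (Fin r) R) (E : Matrix (Fin p) (Fin s) R)
      (B : Matrix (Fin q) (Fin s) R), rk ⟨p, r, A⟩ + rk ⟨q, s, B⟩ ≤ rk (blockSig A E B)

/-- The rank of a ring element, viewed as a `1 × 1` matrix. -/
noncomputable def SylvesterRank.rk1 {R : Type} [Ring R] (f : SylvesterRank R) (a : R) : ℝ :=
  f.rk ⟨1, 1, Matrix.of fun _ _ => a⟩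

/-- The diagonal matrix with `m` diagonal entries `1`, `k` diagonal entries `a` and `j`
diagonal entries `a ^ 2`, as an element of `MatSig R`. -/
def diag3 {R : Type} [CommRing R] (m k j : ℕ) (a : R) : MatSig R :=
  blockSig (1 : Matrix (Fin m) (Fin m) R)
    0 (blockSig (Matrix.diagonal fun _ : Fin k => a) 0
        (Matrix.diagonal fun _ : Fin j => a ^ 2)).2.2


section MalcolmsonMinors

open Matrix Finset

variable {R : Type} [CommRing R]


open Matrix Finset

/-- The ideal generated by all `t × t` minors of a rectangular matrix. -/
def mIdeal (t : ℕ) {α β : Type} (A : Matrix α β R) : Ideal R :=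
  Ideal.span {x | ∃ (r : Fin t → α) (c : Fin t → β), x = (A.submatrix r c).det}

lemma det_mem_mIdeal {t : ℕ} {α β : Type} (A : Matrix α β R) (r : Fin t → α) (c : Fin t → β) :
    (A.submatrix r c).det ∈ mIdeal t A :=
  Ideal.subset_span ⟨r, c, rfl⟩

lemma mIdeal_submatrix_le (t : ℕ) {α β α' β' : Type} (M : Matrix α β R)
    (f : α' → α) (g : β' → β) : mIdeal t (M.submatrix f g) ≤ mIdeal t M := by
  rw [mIdeal, Ideal.span_le]
  rintro x ⟨r, c, rfl⟩
  rw [Matrix.submatrix_submatrix]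
  exact det_mem_mIdeal M _ _

lemma mIdeal_submatrix_equiv (t : ℕ) {α β α' β' : Type} (M : Matrix α β R)
    (e : α' ≃ α) (f : β' ≃ β) : mIdeal t (M.submatrix ⇑e ⇑f) = mIdeal t M := by
  refine le_antisymm (mIdeal_submatrix_le t M ⇑e ⇑f) ?_
  have h : M = (M.submatrix ⇑e ⇑f).submatrix ⇑e.symm ⇑f.symm := by
    simp [Matrix.submatrix_submatrix]
  conv_lhs => rw [h]
  exact mIdeal_submatrix_le t _ _ _

lemma det_mul_rows {t : ℕ} {α : Type} [Fintype α] [DecidableEq α]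
    (X : Matrix (Fin t) α R) (M : Matrix α (Fin t) R) :
    (X * M).det = ∑ f : Fin t → α, (∏ i, X i (f i)) * (M.submatrix f id).det := by
  have h0 : (X * M).det
      = (Matrix.detRowAlternating : (Fin t → R) [⋀^Fin t]→ₗ[R] R).toMultilinearMap
        (fun i => ∑ k : α, X i k • M k) := by
    congr 1
    funext i j
    simp [Matrix.mul_apply]
  rw [h0, MultilinearMap.map_sum]
  refine Finset.sum_congr rfl fun f _ => ?_
  rw [MultilinearMap.map_smul_univ, smul_eq_mul]
  rfl

lemma det_mul_cols {t : ℕ} {α : Type} [Fintype α] [DecidableEq α]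
    (M : Matrix (Fin t) α R) (Y : Matrix α (Fin t) R) :
    (M * Y).det = ∑ g : Fin t → α, (∏ i, Y (g i) i) * (M.submatrix id g).det := by
  rw [← Matrix.det_transpose (M * Y), Matrix.transpose_mul, det_mul_rows]
  refine Finset.sum_congr rfl fun g _ => ?_
  rw [← Matrix.det_transpose (M.submatrix id g)]
  rfl

lemma det_triple_mem {t n₁ n₂ : ℕ} (X : Matrix (Fin t) (Fin n₁) R)
    (B : Matrix (Fin n₁) (Fin n₂) R) (Y : Matrix (Fin n₂) (Fin t) R) :
    (X * B * Y).det ∈ mIdeal t B := by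
  rw [Matrix.mul_assoc, det_mul_rows]
  refine Ideal.sum_mem _ fun f _ => Ideal.mul_mem_left _ _ ?_
  have h : (B * Y).submatrix f id = (B.submatrix f id) * Y := by
    ext i j
    simp [Matrix.mul_apply]
  rw [h, det_mul_cols]
  refine Ideal.sum_mem _ fun g _ => Ideal.mul_mem_left _ _ ?_
  have h2 : (B.submatrix f id).submatrix id g = B.submatrix f g := by
    ext i j; simp
  rw [h2]
  exact det_mem_mIdeal B f g

lemma mIdeal_mul_le (t : ℕ) {p q p' q' : ℕ} (Cc : Matrix (Fin p') (Fin p) R)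
    (B : Matrix (Fin p) (Fin q) R) (Dd : Matrix (Fin q) (Fin q') R) :
    mIdeal t (Cc * B * Dd) ≤ mIdeal t B := by
  rw [mIdeal, Ideal.span_le]
  rintro x ⟨r, c, rfl⟩
  have h : (Cc * B * Dd).submatrix r c
      = (Cc.submatrix r id) * B * (Dd.submatrix id c) := by
    ext i j
    simp [Matrix.mul_apply]
  rw [h]
  exact det_triple_mem _ _ _


lemma mIdeal_fromBlocks_le (t : ℕ) {p q r s : ℕ}
    (C : Matrix (Fin p) (Fin r) R) (E : Matrix (Fin p) (Fin s) R) (D : Matrix (Fin q) (Fin s) R) :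
    mIdeal t (fromBlocks C 0 0 D) ≤ mIdeal t (fromBlocks C E 0 D) := by
  rw [mIdeal, Ideal.span_le]
  rintro x ⟨rr, cc, rfl⟩
  set P : Fin t → Prop := fun i => (rr i).isLeft = true with hP
  set Q : Fin t → Prop := fun i => (cc i).isLeft = true with hQ
  by_cases he : (univ.filter P).card = (univ.filter Q).card
  · -- build an aligning permutation π
    have hcard1 : Fintype.card {i // P i} = Fintype.card {i // Q i} := by
      rw [Fintype.card_subtype, Fintype.card_subtype, he]
    have hcard2 : Fintype.card {i // ¬ P i} = Fintype.card {i // ¬ Q i} := by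
      rw [Fintype.card_subtype_compl, Fintype.card_subtype_compl, hcard1]
    let e₁ : {i // P i} ≃ {i // Q i} := Fintype.equivOfCardEq hcard1
    let e₂ : {i // ¬ P i} ≃ {i // ¬ Q i} := Fintype.equivOfCardEq hcard2
    let π : Equiv.Perm (Fin t) :=
      (Equiv.sumCompl P).symm.trans ((e₁.sumCongr e₂).trans (Equiv.sumCompl Q))
    have hπ : ∀ i, (cc (π i)).isLeft = (rr i).isLeft := by
      intro i
      by_cases hp : P i
      · have h1 : π i = ↑(e₁ ⟨i, hp⟩) := by
          simp [π, Equiv.sumCompl_symm_apply_of_pos hp]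
        have h2 : (cc ↑(e₁ ⟨i, hp⟩)).isLeft = true := (e₁ ⟨i, hp⟩).2
        have hp' : (rr i).isLeft = true := hp
        rw [h1, h2, hp']
      · have h1 : π i = ↑(e₂ ⟨i, hp⟩) := by
          simp [π, Equiv.sumCompl_symm_apply_of_neg hp]
        have h2 : ¬ (cc ↑(e₂ ⟨i, hp⟩)).isLeft = true := (e₂ ⟨i, hp⟩).2
        have hp2 : ¬ (rr i).isLeft = true := hp
        have hp' : (rr i).isLeft = false := by simpa using hp2
        have h2' : (cc ↑(e₂ ⟨i, hp⟩)).isLeft = false := by simpa using h2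
        rw [h1, hp', h2']
    -- products agree on the aligned submatrices
    have hprod : ∀ σ : Equiv.Perm (Fin t),
        (∏ i, ((fromBlocks C 0 0 D).submatrix rr (cc ∘ ⇑π)) (σ i) i)
          = ∏ i, ((fromBlocks C E 0 D).submatrix rr (cc ∘ ⇑π)) (σ i) i := by
      intro σ
      by_cases hall : ∀ i, (rr (σ i)).isLeft = (cc (π i)).isLeft
      · refine Finset.prod_congr rfl fun i _ => ?_
        have hi := hall i
        rcases h1 : rr (σ i) with x | x <;> rcases h2 : cc (π i) with y | y
        · simp [Matrix.submatrix_apply, h1, h2]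
        · exfalso; rw [h1, h2] at hi; simp at hi
        · simp [Matrix.submatrix_apply, h1, h2]
        · simp [Matrix.submatrix_apply, h1, h2]
      · push_neg at hall
        obtain ⟨i₀, hi₀⟩ := hall
        have hM0 : ((fromBlocks C 0 0 D).submatrix rr (cc ∘ ⇑π)) (σ i₀) i₀ = 0 := by
          rcases h1 : rr (σ i₀) with x | x <;> rcases h2 : cc (π i₀) with y | y
          · exfalso; rw [h1, h2] at hi₀; exact hi₀ rfl
          · simp [Matrix.submatrix_apply, h1, h2]
          · simp [Matrix.submatrix_apply, h1, h2]
          · exfalso; rw [h1, h2] at hi₀; exact hi₀ rfl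
        have hN : ∃ i₁, (rr (σ i₁)).isLeft = false ∧ (cc (π i₁)).isLeft = true := by
          by_cases hr0 : (rr (σ i₀)).isLeft = true
          · -- rr (σ i₀) left, hence cc (π i₀) right; use counting
            have hc0 : (cc (π i₀)).isLeft = false := by
              rcases h2 : cc (π i₀) with y | y
              · exfalso; rw [h2] at hi₀; rw [hr0] at hi₀; exact hi₀ rfl
              · rfl
            by_contra hno
            push_neg at hno
            have hmap : ∀ i, P i → P (σ i) := by
              intro i hi
              have h3 : (cc (π i)).isLeft = true := by rw [hπ i]; exact hi
              rcases h4 : (rr (σ i)).isLeft with _ | _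
              · exact absurd h3 (by simpa using hno i h4)
              · exact h4
            have hi₀notP : ¬ P i₀ := by
              intro hip
              have := hπ i₀
              rw [hc0, hip] at this
              exact Bool.false_ne_true this
            have hsub : (insert i₀ (univ.filter P)).image ⇑σ ⊆ univ.filter P := by
              intro b hb
              rw [Finset.mem_image] at hb
              obtain ⟨a, ha, rfl⟩ := hb
              rcases Finset.mem_insert.mp ha with rfl | ha
              · exact Finset.mem_filter.mpr ⟨Finset.mem_univ _, hr0⟩
              · exact Finset.mem_filter.mpr ⟨Finset.mem_univ _,
                  hmap a (Finset.mem_filter.mp ha).2⟩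
            have hcard := Finset.card_le_card hsub
            rw [Finset.card_image_of_injective _ σ.injective,
              Finset.card_insert_of_notMem (fun hmem => hi₀notP (Finset.mem_filter.mp hmem).2)]
              at hcard
            omega
          · refine ⟨i₀, by simpa using hr0, ?_⟩
            rcases h2 : cc (π i₀) with y | y
            · rfl
            · exfalso
              rw [h2] at hi₀
              simp only [Bool.not_eq_true] at hr0
              rw [hr0] at hi₀
              exact hi₀ rfl
        obtain ⟨i₁, hr1, hc1⟩ := hN
        have hN0 : ((fromBlocks C E 0 D).submatrix rr (cc ∘ ⇑π)) (σ i₁) i₁ = 0 := by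
          rcases h1 : rr (σ i₁) with x | x <;> rcases h2 : cc (π i₁) with y | y
          · rw [h1] at hr1; exact absurd hr1 (by simp)
          · rw [h1] at hr1; exact absurd hr1 (by simp)
          · simp [Matrix.submatrix_apply, h1, h2]
          · rw [h2] at hc1; exact absurd hc1 (by simp)
        rw [Finset.prod_eq_zero
            (f := fun i => ((fromBlocks C 0 0 D).submatrix rr (cc ∘ ⇑π)) (σ i) i)
            (Finset.mem_univ i₀) hM0,
          Finset.prod_eq_zero
            (f := fun i => ((fromBlocks C E 0 D).submatrix rr (cc ∘ ⇑π)) (σ i) i)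
            (Finset.mem_univ i₁) hN0]
    have hdet_eq : ((fromBlocks C 0 0 D).submatrix rr (cc ∘ ⇑π)).det
        = ((fromBlocks C E 0 D).submatrix rr (cc ∘ ⇑π)).det := by
      rw [Matrix.det_apply, Matrix.det_apply]
      exact Finset.sum_congr rfl fun σ _ => by rw [hprod σ]
    have hperm : ((fromBlocks C 0 0 D).submatrix rr (cc ∘ ⇑π)).det
        = Equiv.Perm.sign π * ((fromBlocks C 0 0 D).submatrix rr cc).det := by
      have h2 : (fromBlocks C 0 0 D).submatrix rr (cc ∘ ⇑π)
          = ((fromBlocks C 0 0 D).submatrix rr cc).submatrix id ⇑π := rfl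
      rw [h2, Matrix.det_permute']
    have hmain : ((fromBlocks C 0 0 D).submatrix rr cc).det
        = Equiv.Perm.sign π * ((fromBlocks C E 0 D).submatrix rr (cc ∘ ⇑π)).det := by
      rw [← hdet_eq, hperm, ← mul_assoc, ← Int.cast_mul, ← Units.val_mul,
        Int.units_mul_self, Units.val_one, Int.cast_one, one_mul]
    rw [hmain]
    exact Ideal.mul_mem_left _ _ (det_mem_mIdeal _ _ _)
  · -- mismatched counts: the determinant is zero
    have hz : ∀ σ : Equiv.Perm (Fin t),
        (∏ i, ((fromBlocks C 0 0 D).submatrix rr cc) (σ i) i) = 0 := by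
      intro σ
      by_contra hp
      have hfac : ∀ i, ((fromBlocks C 0 0 D).submatrix rr cc) (σ i) i ≠ 0 := by
        intro i hi
        exact hp (Finset.prod_eq_zero (Finset.mem_univ i) hi)
      have hside : ∀ i, (rr (σ i)).isLeft = (cc i).isLeft := by
        intro i
        rcases h1 : rr (σ i) with x | x <;> rcases h2 : cc i with y | y
        · rfl
        · exact absurd (by simp [Matrix.submatrix_apply, h1, h2]) (hfac i)
        · exact absurd (by simp [Matrix.submatrix_apply, h1, h2]) (hfac i)
        · rfl
      apply he
      refine Finset.card_bij' (fun a _ => σ.symm a) (fun a _ => σ a) ?_ ?_ ?_ ?_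
      · intro a ha
        refine Finset.mem_filter.mpr ⟨Finset.mem_univ _, ?_⟩
        have hth := hside (σ.symm a)
        rw [Equiv.apply_symm_apply] at hth
        show (cc ((Equiv.symm σ) a)).isLeft = true
        rw [← hth]
        exact (Finset.mem_filter.mp ha).2
      · intro a ha
        refine Finset.mem_filter.mpr ⟨Finset.mem_univ _, ?_⟩
        show (rr (σ a)).isLeft = true
        rw [hside a]
        exact (Finset.mem_filter.mp ha).2
      · intro a _; exact Equiv.apply_symm_apply σ a
      · intro a _; exact Equiv.symm_apply_apply σ a
    have hdet0 : ((fromBlocks C 0 0 D).submatrix rr cc).det = 0 := by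
      rw [Matrix.det_apply]
      exact Finset.sum_eq_zero fun σ _ => by rw [hz σ, smul_zero]
    rw [hdet0]
    exact Ideal.zero_mem _


lemma MStep_mIdeal_le {A B : MatSig R} (h : MStep A B) (t : ℕ) :
    mIdeal t A.2.2 ≤ mIdeal t B.2.2 := by
  rcases h with ⟨C, D, hE⟩ | ⟨p, q, r, s, C, E, D, hA, hB⟩
  · rw [hE]
    exact mIdeal_mul_le t C B.2.2 D
  · subst hA
    subst hB
    show mIdeal t (Matrix.reindex finSumFinEquiv finSumFinEquiv (fromBlocks C 0 0 D))
        ≤ mIdeal t (Matrix.reindex finSumFinEquiv finSumFinEquiv (fromBlocks C E 0 D))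
    rw [Matrix.reindex_apply, Matrix.reindex_apply, mIdeal_submatrix_equiv,
      mIdeal_submatrix_equiv]
    exact mIdeal_fromBlocks_le t C E D

lemma Msub_mIdeal_le {A B : MatSig R} (h : Msub A B) (t : ℕ) :
    mIdeal t A.2.2 ≤ mIdeal t B.2.2 := by
  induction h with
  | refl => exact le_rfl
  | tail _hab hstep ih => exact ih.trans (MStep_mIdeal_le hstep t)

lemma lower_bound (a : R) (m k j c : ℕ) (hc : c ≤ k) :
    a ^ c ∈ mIdeal (m + c) ((diag3 m k j a).2.2) := by
  set dW : Fin (k + j) → R :=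
    (Sum.elim (fun _ : Fin k => a) (fun _ : Fin j => a ^ 2)) ∘ ⇑finSumFinEquiv.symm with hdW
  have hW : (blockSig (Matrix.diagonal fun _ : Fin k => a) 0
      (Matrix.diagonal fun _ : Fin j => a ^ 2)).2.2 = diagonal dW := by
    show Matrix.reindex finSumFinEquiv finSumFinEquiv
      (fromBlocks (Matrix.diagonal fun _ : Fin k => a) 0 0
        (Matrix.diagonal fun _ : Fin j => a ^ 2)) = _
    rw [Matrix.fromBlocks_diagonal, Matrix.reindex_apply, Matrix.submatrix_diagonal_equiv,
      ← hdW]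
  set dG : Fin m ⊕ Fin (k + j) → R := Sum.elim (fun _ : Fin m => (1 : R)) dW with hdG
  have hA : (diag3 m k j a).2.2
      = (diagonal dG).submatrix ⇑finSumFinEquiv.symm ⇑finSumFinEquiv.symm := by
    show Matrix.reindex finSumFinEquiv finSumFinEquiv
      (fromBlocks (1 : Matrix (Fin m) (Fin m) R) 0 0
        ((blockSig (Matrix.diagonal fun _ : Fin k => a) 0
          (Matrix.diagonal fun _ : Fin j => a ^ 2)).2.2)) = _
    rw [hW, ← Matrix.diagonal_one]
    erw [Matrix.fromBlocks_diagonal, Matrix.reindex_apply, ← hdG]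
    rfl
  rw [hA]
  erw [mIdeal_submatrix_equiv (m + c) (diagonal dG) finSumFinEquiv.symm finSumFinEquiv.symm]
  set rho : Fin (m + c) → Fin m ⊕ Fin (k + j) :=
    (Sum.map id fun i₂ : Fin c => finSumFinEquiv (Sum.inl (Fin.castLE hc i₂)))
      ∘ ⇑finSumFinEquiv.symm with hrho
  have hinj : Function.Injective rho := by
    apply Function.Injective.comp
    · refine Function.Injective.sumMap (fun x y hh => hh) ?_
      intro x y hxy
      exact Fin.castLE_injective hc (Sum.inl_injective (finSumFinEquiv.injective hxy))
    · exact finSumFinEquiv.symm.injective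
  have hsub : (diagonal dG).submatrix rho rho = diagonal (dG ∘ rho) :=
    Matrix.submatrix_diagonal dG rho hinj
  have hdet : ((diagonal dG).submatrix rho rho).det = a ^ c := by
    rw [hsub, Matrix.det_diagonal]
    rw [← Equiv.prod_comp finSumFinEquiv (fun i => (dG ∘ rho) i), Fintype.prod_sum_type]
    have h1 : ∀ x : Fin m, (dG ∘ rho) (finSumFinEquiv (Sum.inl x)) = 1 := by
      intro x
      simp [hrho, hdG]
    have h2 : ∀ x : Fin c, (dG ∘ rho) (finSumFinEquiv (Sum.inr x)) = a := by
      intro x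
      simp [hrho, hdG, hdW]
    rw [Finset.prod_congr rfl (fun x _ => h1 x), Finset.prod_congr rfl (fun x _ => h2 x)]
    simp
  rw [← hdet]
  exact det_mem_mIdeal _ _ _

lemma upper_bound (a : R) (n l t : ℕ) :
    mIdeal t ((blockSig (1 : Matrix (Fin n) (Fin n) R) 0
      (Matrix.diagonal fun _ : Fin l => a ^ 2)).2.2) ≤ Ideal.span {a ^ (2 * (t - n))} := by
  set dB : Fin n ⊕ Fin l → R := Sum.elim (fun _ => (1 : R)) (fun _ => a ^ 2) with hdB
  have hB : (blockSig (1 : Matrix (Fin n) (Fin n) R) 0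
      (Matrix.diagonal fun _ : Fin l => a ^ 2)).2.2
      = (diagonal dB).submatrix ⇑finSumFinEquiv.symm ⇑finSumFinEquiv.symm := by
    show Matrix.reindex finSumFinEquiv finSumFinEquiv
      (fromBlocks (1 : Matrix (Fin n) (Fin n) R) 0 0
        (Matrix.diagonal fun _ : Fin l => a ^ 2)) = _
    rw [← Matrix.diagonal_one, Matrix.fromBlocks_diagonal, Matrix.reindex_apply]
  rw [hB]
  erw [mIdeal_submatrix_equiv t (diagonal dB) finSumFinEquiv.symm finSumFinEquiv.symm]
  rw [mIdeal, Ideal.span_le]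
  rintro x ⟨r, c, rfl⟩
  simp only [SetLike.mem_coe]
  by_cases hinj : Function.Injective r
  · rw [Matrix.det_apply]
    refine Ideal.sum_mem _ fun σ _ => ?_
    rw [Units.smul_def, zsmul_eq_mul]
    refine Ideal.mul_mem_left _ _ ?_
    by_cases hmatch : ∀ i, r (σ i) = c i
    · have hstep : (∏ i, ((diagonal dB).submatrix r c) (σ i) i) = ∏ i, dB (c i) :=
        Finset.prod_congr rfl fun i _ => by
          rw [Matrix.submatrix_apply, hmatch i, Matrix.diagonal_apply_eq]
      have hstep2 : (∏ i, dB (c i)) = ∏ i, dB (r i) := by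
        rw [← Equiv.prod_comp σ (fun i => dB (r i))]
        exact Finset.prod_congr rfl fun i _ => by rw [← hmatch i]
      rw [hstep, hstep2]
      have hval : ∀ i, dB (r i) = if (r i).isLeft = true then 1 else a ^ 2 := by
        intro i
        rcases hri : r i with y | y <;> simp [hdB, hri]
      rw [Finset.prod_congr rfl (fun i _ => hval i), Finset.prod_ite,
        Finset.prod_const_one, one_mul, Finset.prod_const]
      rw [Ideal.mem_span_singleton]
      have hcard1 : (univ.filter fun i => (r i).isLeft = true).card ≤ n := by
        have himg : ∀ i ∈ univ.filter (fun i => (r i).isLeft = true),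
            r i ∈ (univ.filter fun x : Fin n ⊕ Fin l => x.isLeft = true) := by
          intro i hi
          exact Finset.mem_filter.mpr ⟨Finset.mem_univ _, (Finset.mem_filter.mp hi).2⟩
        have hc2 := Finset.card_le_card_of_injOn r himg (Function.Injective.injOn hinj)
        have himgeq : (univ.filter fun x : Fin n ⊕ Fin l => x.isLeft = true)
            = univ.image Sum.inl := by
          ext z
          rcases z with z | z <;> simp
        rw [himgeq, Finset.card_image_of_injective _ Sum.inl_injective, Finset.card_univ,
          Fintype.card_fin] at hc2
        exact hc2
      have hcard2 := Finset.card_filter_add_card_filter_not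
        (s := (univ : Finset (Fin t))) (p := fun i => (r i).isLeft = true)
      rw [Finset.card_univ, Fintype.card_fin] at hcard2
      have hdvd : a ^ (2 * (t - n))
          ∣ a ^ (2 * (univ.filter fun i => ¬ (r i).isLeft = true).card) :=
        pow_dvd_pow a (by omega)
      exact (pow_mul a 2 _) ▸ hdvd
    · push_neg at hmatch
      obtain ⟨i, hi⟩ := hmatch
      have h0 : ((diagonal dB).submatrix r c) (σ i) i = 0 := by
        rw [Matrix.submatrix_apply]
        exact Matrix.diagonal_apply_ne dB hi
      rw [Finset.prod_eq_zero (f := fun i => ((diagonal dB).submatrix r c) (σ i) i)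
        (Finset.mem_univ i) h0]
      exact Ideal.zero_mem _
  · have hpair : ∃ i i', i ≠ i' ∧ r i = r i' := by
      unfold Function.Injective at hinj
      push_neg at hinj
      obtain ⟨i, i', h1, h2⟩ := hinj
      exact ⟨i, i', h2, h1⟩
    obtain ⟨i, i', hne, heq⟩ := hpair
    have hdet0 : ((diagonal dB).submatrix r c).det = 0 := by
      apply Matrix.det_zero_of_row_eq hne
      funext j'
      show diagonal dB (r i) (c j') = diagonal dB (r i') (c j')
      rw [heq]
    rw [hdet0]
    exact Ideal.zero_mem _

end MalcolmsonMinors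

/-- Lemma (upper bound): let `R` be a commutative unital ring, `a ∈ R` and `m, n, j, k, l ≥ 0`
with `a ^ (2|n-m|+1) ∉ R a ^ (2|n-m|+2)`.  If the diagonal matrix with `m` entries `1`,
`k` entries `a` and `j` entries `a²` is Malcolmson subequivalent to the diagonal matrix with
`n` entries `1` and `l` entries `a²`, then `k ≤ 2(n - m)`. -/


theorem stmt_6 {R : Type} [CommRing R] (a : R) (m n j k l : ℕ)
    (ha : a ^ (2 * ((n : ℤ) - m).natAbs + 1) ∉ Ideal.span {a ^ (2 * ((n : ℤ) - m).natAbs + 2)})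
    (h : Msub (diag3 m k j a)
      (blockSig (1 : Matrix (Fin n) (Fin n) R) 0 (Matrix.diagonal fun _ : Fin l => a ^ 2))) :
    (k : ℤ) ≤ 2 * ((n : ℤ) - m) := by
  by_contra hk
  push_neg at hk
  have hmono : ∀ t, mIdeal t (diag3 m k j a).2.2 ≤ mIdeal t
      ((blockSig (1 : Matrix (Fin n) (Fin n) R) 0
        (Matrix.diagonal fun _ : Fin l => a ^ 2)).2.2) :=
    fun t => Msub_mIdeal_le h t
  rcases le_or_gt (m : ℤ) (n : ℤ) with hmn | hmn
  · have hd : ((n : ℤ) - m).natAbs = n - m := by omega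
    have hc : 2 * (n - m) + 1 ≤ k := by omega
    have h1 := lower_bound a m k j (2 * (n - m) + 1) hc
    have h3 := upper_bound a n l (m + (2 * (n - m) + 1)) (hmono _ h1)
    have hee : 2 * ((m + (2 * (n - m) + 1)) - n) = 2 * (n - m) + 2 := by omega
    rw [hee] at h3
    rw [hd] at ha
    exact ha h3
  · have h1 := lower_bound a m k j 0 (Nat.zero_le k)
    have h3 := upper_bound a n l (m + 0) (hmono _ h1)
    rw [Ideal.mem_span_singleton] at h3
    apply ha
    rw [Ideal.mem_span_singleton]
    have hdvd : a ∣ 1 := by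
      have ha2 : a ∣ a ^ (2 * ((m + 0) - n)) := dvd_pow_self a (by omega)
      exact ha2.trans (by simpa using h3)
    obtain ⟨u, hu⟩ := hdvd
    refine ⟨u, ?_⟩
    have hcalc : a ^ (2 * ((n : ℤ) - m).natAbs + 2) * u
        = a ^ (2 * ((n : ℤ) - m).natAbs + 1) * (a * u) := by ring
    rw [hcalc, ← hu, mul_one]
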